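/- Let f_1, …, f_P : ℝ^n → ℝ be continuously differentiable and suppose there is L > 0 such that each gradient ∇f_p is L-Lipschitz continuous; set f = ∑_{p=1}^P f_p. Let γ ∈ (0,1), δ ∈ (0,1) and τ > 0. Let {w^k} ⊂ ℝ^n be a bounded sequence and {ζ^k} ⊂ (0,∞) with ζ^k → 0. For each k let (h_1^k, …, h_P^k) be a permutation of {1, …, P}, define w̃_0^k = w^k, w̃_i^k = w̃_{i−1}^k − ζ^k ∇f_{h_i^k}(w̃_{i−1}^k) for i = 1, …, P, and d^k = −∑_{i=1}^P ∇f_{h_i^k}(w̃_{i−1}^k). Suppose there is an infinite set K ⊆ ℕ such that for every k ∈ K at least one of the following holds: (i) ‖d^k‖ ≤ τ ζ^k; (ii) f(w^k + ζ^k d^k) > f(w^k) − γ ζ^k ‖d^k‖²; (iii) there is α^k > 0 with α^k ‖d^k‖² ≤ τ ζ^k and f(w^k + (α^k/δ) d^k) > f(w^k) − γ (α^k/δ) ‖d^k‖². Then {w^k} admits limit points and at least one limit point w̄ of {w^k} satisfies ∇f(w̄) = 0. -/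

import Mathlib

open Filter Finset
set_option maxHeartbeats 1000000

lemma my_hasGradientAt_sum {F : Type*} [NormedAddCommGroup F] [InnerProductSpace ℝ F]
    [CompleteSpace F] {ι : Type*} (s : Finset ι) (f : ι → F → ℝ) (g : ι → F) (x : F)
    (h : ∀ i ∈ s, HasGradientAt (f i) (g i) x) :
    HasGradientAt (fun y => ∑ i ∈ s, f i y) (∑ i ∈ s, g i) x := by
  unfold HasGradientAt HasGradientAtFilter at *
  rw [map_sum]
  exact HasFDerivAt.fun_sum fun i hi => h i hi

lemma my_descent {E : Type*} [NormedAddCommGroup E] [InnerProductSpace ℝ E]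
    [CompleteSpace E] (F : E → ℝ) (hFd : Differentiable ℝ F) (LF : ℝ) (hLF : 0 ≤ LF)
    (hlip : ∀ u v, ‖gradient F u - gradient F v‖ ≤ LF * ‖u - v‖) (x v : E) :
    F (x + v) ≤ F x + inner ℝ (gradient F x) v + LF * ‖v‖ ^ 2 := by
  set g : ℝ → ℝ := fun t => F (x + t • v) with hg_def
  have hg : ∀ t : ℝ, HasDerivAt g (inner ℝ (gradient F (x + t • v)) v : ℝ) t := by
    intro t
    have h1 : HasFDerivAt F (InnerProductSpace.toDual ℝ E (gradient F (x + t • v)))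
        (x + t • v) := (hFd _).hasGradientAt
    have h2 : HasDerivAt (fun t : ℝ => x + t • v) v t := by
      simpa using ((hasDerivAt_id t).smul_const v).const_add x
    exact h1.comp_hasDerivAt t h2
  obtain ⟨c, hc, hceq⟩ := exists_hasDerivAt_eq_slope g
      (fun t => (inner ℝ (gradient F (x + t • v)) v : ℝ)) (by norm_num : (0:ℝ) < 1)
      (fun t _ => (hg t).continuousAt.continuousWithinAt)
      (fun t _ => hg t)
  have h0 : g 0 = F x := by simp [hg_def]
  have h1 : g 1 = F (x + v) := by simp [hg_def]
  rw [h0, h1] at hceq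
  have key : F (x + v) - F x = (inner ℝ (gradient F x) v : ℝ) +
      (inner ℝ (gradient F (x + c • v) - gradient F x) v : ℝ) := by
    rw [inner_sub_left]
    field_simp at hceq
    linarith [hceq]
  have hb : (inner ℝ (gradient F (x + c • v) - gradient F x) v : ℝ) ≤ LF * ‖v‖ ^ 2 := by
    calc (inner ℝ (gradient F (x + c • v) - gradient F x) v : ℝ)
        ≤ ‖gradient F (x + c • v) - gradient F x‖ * ‖v‖ := real_inner_le_norm _ _
      _ ≤ (LF * ‖x + c • v - x‖) * ‖v‖ := by
          gcongr; exact hlip _ _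
      _ ≤ LF * ‖v‖ ^ 2 := by
          have heq : ‖x + c • v - x‖ = c * ‖v‖ := by
            rw [add_sub_cancel_left, norm_smul, Real.norm_eq_abs, abs_of_pos hc.1]
          rw [heq]
          have h1 : c * ‖v‖ ≤ ‖v‖ := by
            nlinarith [norm_nonneg v, hc.1, hc.2]
          nlinarith [mul_le_mul_of_nonneg_right (mul_le_mul_of_nonneg_left h1 hLF) (norm_nonneg v)]
  linarith


/-- convergence of the monotone CMA.
Under Lipschitz continuity of the component gradients, if `{w^k}` is bounded,
`ζ^k → 0`, and along an infinite set `K` of iterations one of the three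
stepsize-reduction conditions (i)–(iii) of the monotone CMA holds, then `{w^k}`
admits a limit point `w̄` with `∇f(w̄) = 0`, where `f = ∑_{p=1}^P f_p`. -/
theorem stmt_10 {n P : ℕ}
    (f : Fin P → EuclideanSpace ℝ (Fin n) → ℝ)
    (hf : ∀ p, ContDiff ℝ 1 (f p))
    (L : ℝ) (hL : 0 < L)
    (hlip : ∀ p (u v : EuclideanSpace ℝ (Fin n)),
      ‖gradient (f p) u - gradient (f p) v‖ ≤ L * ‖u - v‖)
    (γ : ℝ) (hγ : γ ∈ Set.Ioo (0 : ℝ) 1)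
    (δ : ℝ) (hδ : δ ∈ Set.Ioo (0 : ℝ) 1)
    (τ : ℝ) (hτ : 0 < τ)
    (w : ℕ → EuclideanSpace ℝ (Fin n)) (hwbdd : ∃ C, ∀ k, ‖w k‖ ≤ C)
    (ζ : ℕ → ℝ) (hζpos : ∀ k, 0 < ζ k)
    (hζto0 : Tendsto ζ atTop (nhds 0))
    (h : ℕ → ℕ → Fin P)
    (hperm : ∀ k, Function.Bijective (fun i : Fin P => h k i.val))
    (wt : ℕ → ℕ → EuclideanSpace ℝ (Fin n))
    (hinit : ∀ k, wt k 0 = w k)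
    (hiter : ∀ k, ∀ i, i < P →
      wt k (i + 1) = wt k i - ζ k • gradient (f (h k i)) (wt k i))
    (d : ℕ → EuclideanSpace ℝ (Fin n))
    (hd : ∀ k, d k = -∑ i ∈ Finset.range P, gradient (f (h k i)) (wt k i))
    (F : EuclideanSpace ℝ (Fin n) → ℝ) (hF : F = fun x => ∑ p : Fin P, f p x)
    (K : Set ℕ) (hKinf : K.Infinite)
    (hK : ∀ k ∈ K,
      ‖d k‖ ≤ τ * ζ k ∨
      F (w k + ζ k • d k) > F (w k) - γ * ζ k * ‖d k‖ ^ 2 ∨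
      (∃ α : ℝ, 0 < α ∧ α * ‖d k‖ ^ 2 ≤ τ * ζ k ∧
        F (w k + (α / δ) • d k) > F (w k) - γ * (α / δ) * ‖d k‖ ^ 2)) :
    ∃ wbar : EuclideanSpace ℝ (Fin n),
      (∃ φ : ℕ → ℕ, StrictMono φ ∧
        Tendsto (fun k => w (φ k)) atTop (nhds wbar)) ∧
      gradient F wbar = 0 := by
  classical
  obtain ⟨C₀, hC₀⟩ := hwbdd
  set C : ℝ := max C₀ 0 with hCdef
  have hC : ∀ k, ‖w k‖ ≤ C := fun k => (hC₀ k).trans (le_max_left _ _)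
  have hC0 : (0:ℝ) ≤ C := le_max_right _ _
  have hdiff : ∀ p, Differentiable ℝ (f p) := fun p => (hf p).differentiable one_ne_zero
  have hgradAt : ∀ p x, HasGradientAt (f p) (gradient (f p) x) x :=
    fun p x => ((hdiff p) x).hasGradientAt
  set G0 : ℝ := ∑ p : Fin P, ‖gradient (f p) 0‖ with hG0def
  have hG0 : 0 ≤ G0 := Finset.sum_nonneg fun _ _ => norm_nonneg _
  have hgb : ∀ p x, ‖gradient (f p) x‖ ≤ G0 + L * ‖x‖ := by
    intro p x
    have h1 := hlip p x 0
    rw [sub_zero] at h1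
    have h2 : ‖gradient (f p) 0‖ ≤ G0 :=
      Finset.single_le_sum (f := fun p => ‖gradient (f p) 0‖)
        (fun _ _ => norm_nonneg _) (Finset.mem_univ p)
    calc ‖gradient (f p) x‖
        ≤ ‖gradient (f p) x - gradient (f p) 0‖ + ‖gradient (f p) 0‖ := by
          simpa using norm_add_le (gradient (f p) x - gradient (f p) 0) (gradient (f p) 0)
      _ ≤ G0 + L * ‖x‖ := by linarith
  -- bound on inner iterates
  set B : ℝ := (C + G0 / L) * (1 + L) ^ P with hBdef
  have hCG : 0 ≤ C + G0 / L := by positivity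
  have h1L : (1:ℝ) ≤ 1 + L := by linarith
  have hwt : ∀ k, ζ k ≤ 1 → ∀ i, i ≤ P →
      ‖wt k i‖ ≤ (C + G0 / L) * (1 + L) ^ i - G0 / L := by
    intro k hζ1 i
    induction i with
    | zero =>
      intro _
      rw [hinit]
      have : (0:ℝ) ≤ G0 / L := by positivity
      calc ‖w k‖ ≤ C := hC k
        _ ≤ (C + G0 / L) * (1 + L) ^ 0 - G0 / L := by simp
    | succ i ih =>
      intro hiP
      have hiP' : i < P := hiP
      have hprev := ih (le_of_lt hiP')
      rw [hiter k i hiP']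
      have hgn : ‖gradient (f (h k i)) (wt k i)‖ ≤ G0 + L * ‖wt k i‖ := hgb _ _
      have hsm : ‖ζ k • gradient (f (h k i)) (wt k i)‖ ≤ G0 + L * ‖wt k i‖ := by
        rw [norm_smul, Real.norm_eq_abs, abs_of_pos (hζpos k)]
        have hnn : 0 ≤ G0 + L * ‖wt k i‖ := by positivity
        nlinarith [hζpos k]
      calc ‖wt k i - ζ k • gradient (f (h k i)) (wt k i)‖
          ≤ ‖wt k i‖ + ‖ζ k • gradient (f (h k i)) (wt k i)‖ := norm_sub_le _ _
        _ ≤ ‖wt k i‖ + (G0 + L * ‖wt k i‖) := by linarith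
        _ = (1 + L) * ‖wt k i‖ + G0 := by ring
        _ ≤ (1 + L) * ((C + G0 / L) * (1 + L) ^ i - G0 / L) + G0 := by nlinarith
        _ = (C + G0 / L) * (1 + L) ^ (i + 1) - G0 / L := by
            field_simp
            ring
  have hwtB : ∀ k, ζ k ≤ 1 → ∀ i, i ≤ P → ‖wt k i‖ ≤ B := by
    intro k hζ1 i hiP
    have h1 := hwt k hζ1 i hiP
    have h2 : (1 + L) ^ i ≤ (1 + L) ^ P := pow_le_pow_right₀ h1L hiP
    have h3 : (0:ℝ) ≤ G0 / L := by positivity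
    nlinarith
  have hB0 : 0 ≤ B := by positivity
  set M1 : ℝ := G0 + L * B with hM1def
  have hM10 : 0 ≤ M1 := by positivity
  have hM1 : ∀ k, ζ k ≤ 1 → ∀ i, i < P →
      ‖gradient (f (h k i)) (wt k i)‖ ≤ M1 := by
    intro k hζ1 i hiP
    have := hgb (h k i) (wt k i)
    have := hwtB k hζ1 i (le_of_lt hiP)
    nlinarith
  have hdist : ∀ k, ζ k ≤ 1 → ∀ i, i ≤ P →
      ‖wt k i - w k‖ ≤ ζ k * (i * M1) := by
    intro k hζ1 i
    induction i with
    | zero => intro _; simp [hinit]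
    | succ i ih =>
      intro hiP
      have hiP' : i < P := hiP
      have hprev := ih (le_of_lt hiP')
      rw [hiter k i hiP']
      have hgn := hM1 k hζ1 i hiP'
      calc ‖wt k i - ζ k • gradient (f (h k i)) (wt k i) - w k‖
          = ‖(wt k i - w k) - ζ k • gradient (f (h k i)) (wt k i)‖ := by
            congr 1; abel
        _ ≤ ‖wt k i - w k‖ + ‖ζ k • gradient (f (h k i)) (wt k i)‖ := norm_sub_le _ _
        _ ≤ ζ k * (i * M1) + ζ k * M1 := by
            rw [norm_smul, Real.norm_eq_abs, abs_of_pos (hζpos k)]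
            have := hζpos k
            nlinarith
        _ = ζ k * ((i + 1 : ℕ) * M1) := by push_cast; ring
  set M : ℝ := P * M1 with hMdef
  have hM0 : 0 ≤ M := by positivity
  have hdb : ∀ k, ζ k ≤ 1 → ‖d k‖ ≤ M := by
    intro k hζ1
    rw [hd, norm_neg]
    calc ‖∑ i ∈ Finset.range P, gradient (f (h k i)) (wt k i)‖
        ≤ ∑ i ∈ Finset.range P, ‖gradient (f (h k i)) (wt k i)‖ := norm_sum_le _ _
      _ ≤ ∑ _i ∈ Finset.range P, M1 :=
          Finset.sum_le_sum fun i hi => hM1 k hζ1 i (Finset.mem_range.mp hi)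
      _ = M := by simp [hMdef, mul_comm]
  have gradF : ∀ x, gradient F x = ∑ p : Fin P, gradient (f p) x := by
    intro x
    have := my_hasGradientAt_sum (Finset.univ) f (fun p => gradient (f p) x) x
      (fun p _ => hgradAt p x)
    rw [hF]
    exact this.gradient
  have hreidx : ∀ k x, (∑ p : Fin P, gradient (f p) x) =
      ∑ i ∈ Finset.range P, gradient (f (h k i)) x := by
    intro k x
    rw [← Fin.sum_univ_eq_sum_range (fun i => gradient (f (h k i)) x) P]
    exact (Fintype.sum_bijective _ (hperm k)
      (fun i : Fin P => gradient (f (h k i.val)) x)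
      (fun p => gradient (f p) x) (fun i => rfl)).symm
  set E : ℝ := L * P * (P * M1) with hEdef
  have hE0 : 0 ≤ E := by positivity
  have he : ∀ k, ζ k ≤ 1 → ‖d k + gradient F (w k)‖ ≤ E * ζ k := by
    intro k hζ1
    have heq : d k + gradient F (w k)
        = ∑ i ∈ Finset.range P,
            (gradient (f (h k i)) (w k) - gradient (f (h k i)) (wt k i)) := by
      rw [hd, gradF, hreidx k, Finset.sum_sub_distrib]
      abel
    rw [heq]
    calc ‖∑ i ∈ Finset.range P,
            (gradient (f (h k i)) (w k) - gradient (f (h k i)) (wt k i))‖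
        ≤ ∑ i ∈ Finset.range P,
            ‖gradient (f (h k i)) (w k) - gradient (f (h k i)) (wt k i)‖ := norm_sum_le _ _
      _ ≤ ∑ _i ∈ Finset.range P, L * (ζ k * (P * M1)) := by
          apply Finset.sum_le_sum
          intro i hi
          have h1 := hlip (h k i) (w k) (wt k i)
          have h2 : ‖w k - wt k i‖ ≤ ζ k * (P * M1) := by
            rw [norm_sub_rev]
            have h3 := hdist k hζ1 i (le_of_lt (Finset.mem_range.mp hi))
            have h4 : (i : ℝ) * M1 ≤ P * M1 := by
              have : (i:ℝ) ≤ P := by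
                exact_mod_cast le_of_lt (Finset.mem_range.mp hi)
              nlinarith
            nlinarith [hζpos k]
          nlinarith [hζpos k]
      _ = E * ζ k := by simp [hEdef]; ring
  set LF : ℝ := P * L with hLFdef
  have hLF0 : 0 ≤ LF := by positivity
  have hFlip : ∀ u v, ‖gradient F u - gradient F v‖ ≤ LF * ‖u - v‖ := by
    intro u v
    rw [gradF, gradF, ← Finset.sum_sub_distrib]
    calc ‖∑ p : Fin P, (gradient (f p) u - gradient (f p) v)‖
        ≤ ∑ p : Fin P, ‖gradient (f p) u - gradient (f p) v‖ := norm_sum_le _ _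
      _ ≤ ∑ _p : Fin P, L * ‖u - v‖ := Finset.sum_le_sum fun p _ => hlip p u v
      _ = LF * ‖u - v‖ := by simp [hLFdef]; ring
  have hFd : Differentiable ℝ F := by
    rw [hF]
    exact Differentiable.fun_sum fun p _ => hdiff p
  have key : ∀ x (v : EuclideanSpace ℝ (Fin n)),
      F (x + v) ≤ F x + inner ℝ (gradient F x) v + LF * ‖v‖ ^ 2 :=
    my_descent F hFd LF hLF0 hFlip
  have hip : ∀ k, ζ k ≤ 1 →
      (inner ℝ (gradient F (w k)) (d k) : ℝ) ≤ E * ζ k * M - ‖d k‖ ^ 2 := by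
    intro k hζ1
    have heq : gradient F (w k) = (d k + gradient F (w k)) - d k := by abel
    rw [heq, inner_sub_left]
    have h1 : (inner ℝ (d k + gradient F (w k)) (d k) : ℝ)
        ≤ ‖d k + gradient F (w k)‖ * ‖d k‖ := real_inner_le_norm _ _
    have h2 : (inner ℝ (d k) (d k) : ℝ) = ‖d k‖ ^ 2 := real_inner_self_eq_norm_sq _
    have h3 := he k hζ1
    have h4 := hdb k hζ1
    have h5 : ‖d k + gradient F (w k)‖ * ‖d k‖ ≤ E * ζ k * M := by
      have := norm_nonneg (d k)
      have := norm_nonneg (d k + gradient F (w k))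
      nlinarith [hζpos k]
    linarith
  -- the key quantitative bound along K
  have hγ1 : 0 < 1 - γ := by have := hγ.2; linarith
  set A : ℝ := (E * M + LF * M ^ 2 + LF * τ / δ) / (1 - γ) + τ * M + 1 with hAdef
  have hQ0 : (0:ℝ) ≤ E * M + LF * M ^ 2 + LF * τ / δ := by
    have : (0:ℝ) ≤ LF * τ / δ := div_nonneg (mul_nonneg hLF0 hτ.le) hδ.1.le
    nlinarith
  have hA1 : E * M + LF * M ^ 2 + LF * τ / δ ≤ (1 - γ) * A := by
    have heq : (1 - γ) * A = (E * M + LF * M ^ 2 + LF * τ / δ) + (1 - γ) * (τ * M + 1) := by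
      rw [hAdef]
      field_simp
      ring
    nlinarith [mul_nonneg hτ.le hM0]
  have hA0 : 0 ≤ A := by
    have h1 : (0:ℝ) ≤ (E * M + LF * M ^ 2 + LF * τ / δ) / (1 - γ) := div_nonneg hQ0 hγ1.le
    rw [hAdef]
    nlinarith [mul_nonneg hτ.le hM0]
  have hAτM : τ * M ≤ A := by
    have : (0:ℝ) ≤ (E * M + LF * M ^ 2 + LF * τ / δ) / (1 - γ) := div_nonneg hQ0 hγ1.le
    rw [hAdef]; linarith
  clear_value A E M LF M1 B G0 C
  clear hAdef hEdef hMdef hLFdef hM1def hBdef hG0def hCdef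
  have hdsq : ∀ k ∈ K, ζ k ≤ 1 → ‖d k‖ ^ 2 ≤ A * ζ k := by
    intro k hkK hζ1
    have hζk := hζpos k
    have hdM := hdb k hζ1
    have hipk := hip k hζ1
    have hd0 := norm_nonneg (d k)
    rcases hK k hkK with hcase | hcase | ⟨α, hα0, hατ, hcase⟩
    · -- case (i): ‖d‖ ≤ τ ζ
      nlinarith
    · -- case (ii): failure at stepsize ζ
      have hub : F (w k + ζ k • d k) ≤ F (w k) +
          ζ k * (inner ℝ (gradient F (w k)) (d k) : ℝ) + LF * (ζ k ^ 2 * ‖d k‖ ^ 2) := by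
        have hkey := key (w k) (ζ k • d k)
        rw [real_inner_smul_right, norm_smul, Real.norm_eq_abs, mul_pow, sq_abs] at hkey
        linarith
      have h5 : ζ k * (inner ℝ (gradient F (w k)) (d k) : ℝ)
          ≤ ζ k * (E * ζ k * M - ‖d k‖ ^ 2) :=
        mul_le_mul_of_nonneg_left hipk hζk.le
      have hD2 : ‖d k‖ ^ 2 ≤ M ^ 2 := by nlinarith
      have h6 : ζ k * ((1 - γ) * ‖d k‖ ^ 2) <
          ζ k * ((E * M + LF * M ^ 2) * ζ k) := by
        nlinarith [mul_nonneg (mul_nonneg hLF0 (sq_nonneg (ζ k))) (sub_nonneg.mpr hD2)]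
      have h7 : (1 - γ) * ‖d k‖ ^ 2 < (E * M + LF * M ^ 2) * ζ k :=
        lt_of_mul_lt_mul_left h6 hζk.le
      have h8 : (0:ℝ) ≤ LF * τ / δ := div_nonneg (mul_nonneg hLF0 hτ.le) hδ.1.le
      have h9 : (1 - γ) * ‖d k‖ ^ 2 ≤ (1 - γ) * (A * ζ k) := by
        nlinarith [mul_le_mul_of_nonneg_right hA1 hζk.le, mul_nonneg h8 hζk.le]
      exact le_of_mul_le_mul_left h9 hγ1
    · -- case (iii): failure at extrapolated stepsize α/δ
      have hδ0 := hδ.1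
      have ht0 : 0 < α / δ := div_pos hα0 hδ0
      have htd : (α / δ) * ‖d k‖ ^ 2 ≤ τ * ζ k / δ := by
        rw [div_mul_eq_mul_div]
        gcongr
      have hub : F (w k + (α / δ) • d k) ≤ F (w k) +
          (α / δ) * (inner ℝ (gradient F (w k)) (d k) : ℝ) +
          LF * ((α / δ) ^ 2 * ‖d k‖ ^ 2) := by
        have hkey := key (w k) ((α / δ) • d k)
        rw [real_inner_smul_right, norm_smul, Real.norm_eq_abs, mul_pow, sq_abs] at hkey
        linarith
      have h5 : (α / δ) * (inner ℝ (gradient F (w k)) (d k) : ℝ)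
          ≤ (α / δ) * (E * ζ k * M - ‖d k‖ ^ 2) :=
        mul_le_mul_of_nonneg_left hipk ht0.le
      have hLFt : LF * ((α / δ) ^ 2 * ‖d k‖ ^ 2) ≤ (α / δ) * (LF * (τ * ζ k / δ)) := by
        have h5' : (α / δ) * ((α / δ) * ‖d k‖ ^ 2) ≤ (α / δ) * (τ * ζ k / δ) :=
          mul_le_mul_of_nonneg_left htd ht0.le
        linarith [mul_le_mul_of_nonneg_left h5' hLF0,
          mul_le_mul_of_nonneg_left htd hLF0]
      have h6 : (α / δ) * ((1 - γ) * ‖d k‖ ^ 2) <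
          (α / δ) * (E * M * ζ k + LF * (τ * ζ k / δ)) := by
        linarith [hcase, hub, h5, hLFt]
      have h7 : (1 - γ) * ‖d k‖ ^ 2 < E * M * ζ k + LF * (τ * ζ k / δ) :=
        lt_of_mul_lt_mul_left h6 ht0.le
      have h8 : E * M * ζ k + LF * (τ * ζ k / δ) =
          (E * M + LF * τ / δ) * ζ k := by field_simp
      have h9 : (1 - γ) * ‖d k‖ ^ 2 ≤ (1 - γ) * (A * ζ k) := by
        rw [h8] at h7
        linarith [mul_le_mul_of_nonneg_right hA1 hζk.le,
          mul_nonneg (mul_nonneg (mul_nonneg hLF0 hM0) hM0) hζk.le]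
      exact le_of_mul_le_mul_left h9 hγ1
  -- extract a convergent subsequence along K
  haveI : Infinite K := hKinf.to_subtype
  set ψ : ℕ ↪o ℕ := Nat.orderEmbeddingOfSet K with hψdef
  have hψmem : ∀ m, ψ m ∈ K := by
    intro m
    rw [hψdef, Nat.orderEmbeddingOfSet_apply]
    exact (Nat.Subtype.ofNat K m).property
  obtain ⟨a, -, φ', hφ'mono, hconv⟩ := tendsto_subseq_of_bounded
      (Metric.isBounded_closedBall (x := (0 : EuclideanSpace ℝ (Fin n))) (r := C))
      (x := fun m => w (ψ m))
      (fun m => mem_closedBall_zero_iff.mpr (hC (ψ m)))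
  have hφmono : StrictMono (fun m => ψ (φ' m)) :=
    fun i j hij => ψ.strictMono (hφ'mono hij)
  refine ⟨a, ⟨fun m => ψ (φ' m), hφmono, hconv⟩, ?_⟩
  -- show the gradient vanishes at the limit point
  have hζφ : Tendsto (fun m => ζ (ψ (φ' m))) atTop (nhds 0) :=
    hζto0.comp hφmono.tendsto_atTop
  have hev1 : ∀ᶠ m in atTop, ζ (ψ (φ' m)) ≤ 1 :=
    hζφ.eventually (eventually_le_nhds one_pos)
  have hnb : ∀ᶠ m in atTop, ‖gradient F (w (ψ (φ' m)))‖ ≤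
      Real.sqrt (A * ζ (ψ (φ' m))) + E * ζ (ψ (φ' m)) := by
    filter_upwards [hev1] with m hm
    have h1 := hdsq (ψ (φ' m)) (hψmem (φ' m)) hm
    have h2 := he (ψ (φ' m)) hm
    have h3 : ‖d (ψ (φ' m))‖ ≤ Real.sqrt (A * ζ (ψ (φ' m))) :=
      Real.le_sqrt_of_sq_le h1
    calc ‖gradient F (w (ψ (φ' m)))‖
        = ‖(d (ψ (φ' m)) + gradient F (w (ψ (φ' m)))) - d (ψ (φ' m))‖ := by
          rw [add_sub_cancel_left]
      _ ≤ ‖d (ψ (φ' m)) + gradient F (w (ψ (φ' m)))‖ + ‖d (ψ (φ' m))‖ :=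
          norm_sub_le _ _
      _ ≤ Real.sqrt (A * ζ (ψ (φ' m))) + E * ζ (ψ (φ' m)) := by linarith
  have hrhs : Tendsto (fun m => Real.sqrt (A * ζ (ψ (φ' m))) + E * ζ (ψ (φ' m)))
      atTop (nhds 0) := by
    have h1 : Tendsto (fun m => A * ζ (ψ (φ' m))) atTop (nhds 0) := by
      simpa using hζφ.const_mul A
    have h2 : Tendsto (fun m => Real.sqrt (A * ζ (ψ (φ' m)))) atTop (nhds 0) := by
      have := (Real.continuous_sqrt.tendsto 0).comp h1
      simpa [Function.comp_def] using this
    have h3 : Tendsto (fun m => E * ζ (ψ (φ' m))) atTop (nhds 0) := by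
      simpa using hζφ.const_mul E
    simpa using h2.add h3
  have hgn : Tendsto (fun m => gradient F (w (ψ (φ' m)))) atTop (nhds 0) := by
    rw [tendsto_zero_iff_norm_tendsto_zero]
    exact squeeze_zero' (Eventually.of_forall fun m => norm_nonneg _) hnb hrhs
  have hga : Tendsto (fun m => gradient F (w (ψ (φ' m)))) atTop (nhds (gradient F a)) := by
    have h0 : Tendsto (fun m => w (ψ (φ' m))) atTop (nhds a) := hconv
    rw [tendsto_iff_norm_sub_tendsto_zero] at h0 ⊢
    apply squeeze_zero (fun m => norm_nonneg _)
      (fun m => hFlip (w (ψ (φ' m))) a)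
    simpa using h0.const_mul LF
  exact tendsto_nhds_unique hga hgn
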